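/- For every integer m ≥ 1 and every s ∈ (0,1], S_m(s) ≤ 2 + (3 + μ·√m)/s. -/

import Mathlib

open Real MeasureTheory Finset

/-- Density of the standard normal distribution. -/
noncomputable def stdPdf (x : ℝ) : ℝ := Real.exp (-x ^ 2 / 2) / Real.sqrt (2 * Real.pi)

/-- Cumulative distribution function of the standard normal distribution. -/
noncomputable def stdCdf (x : ℝ) : ℝ := ∫ t in Set.Iic x, stdPdf t

/-- The Mills ratio. -/
noncomputable def mills (x : ℝ) : ℝ := (1 - stdCdf x) / stdPdf x

/-- The function `f(x) = x - x² M(x)`. -/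
noncomputable def fMills (x : ℝ) : ℝ := x - x ^ 2 * mills x

/-- `μ`, the supremum of `f` over `[0, ∞)`. -/
noncomputable def muMills : ℝ := sSup (fMills '' Set.Ici 0)

/-- The probability simplex. -/
def probSimplex (n : ℕ) : Set (Fin n → ℝ) :=
  {p | (∀ i, 0 ≤ p i) ∧ ∑ i, p i = 1}

/-- The positive probability simplex. -/
def probSimplexPos (n : ℕ) : Set (Fin n → ℝ) :=
  {p | (∀ i, 0 < p i) ∧ ∑ i, p i = 1}

/-- Expected number of connected components of Ross's random graph. -/
noncomputable def EC {n : ℕ} (p : Fin n → ℝ) : ℝ :=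
  ∑ S ∈ (Finset.univ : Finset (Fin n)).powerset.filter (fun S => S.Nonempty),
    (S.card - 1).factorial * ∏ j ∈ S, p j

/-- The total variation distance. -/
noncomputable def TV {n : ℕ} (p q : Fin n → ℝ) : ℝ := (∑ i, |p i - q i|) / 2

/-- The decreasing rearrangement of a vector. -/
noncomputable def decRearrange {n : ℕ} (x : Fin n → ℝ) : Fin n → ℝ :=
  fun j => x (Tuple.sort x j.rev)

/-- `Majorizes x y` means `x ≻ y`. -/
def Majorizes {n : ℕ} (x y : Fin n → ℝ) : Prop :=
  (∀ k : ℕ, ∑ j ∈ Finset.univ.filter (fun j : Fin n => (j : ℕ) < k), decRearrange y j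
      ≤ ∑ j ∈ Finset.univ.filter (fun j : Fin n => (j : ℕ) < k), decRearrange x j)
  ∧ ∑ j, x j = ∑ j, y j

/-- The coefficients `c_{k,m}`. -/
noncomputable def ckm (m k : ℕ) : ℝ := (m.choose k) * (k + 1).factorial / (m : ℝ) ^ k

/-- The sum `S_m(s)`. -/
noncomputable def Sm (m : ℕ) (s : ℝ) : ℝ := ∑ k ∈ Finset.Icc 1 m, ckm m k * (1 - s) ^ (k - 1)

/-- The quantity `B_m(s)`. -/
noncomputable def Bm (m : ℕ) (s : ℝ) : ℝ := s * ∑ k ∈ Finset.Icc 1 m, ckm m k * (1 - s) ^ k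


open Set Filter

lemma stdPdf_pos (x : ℝ) : 0 < stdPdf x :=
  div_pos (exp_pos _) (Real.sqrt_pos.2 (by positivity))

lemma integrable_gauss : Integrable (fun t : ℝ => Real.exp (-t^2/2)) := by
  have := integrable_exp_neg_mul_sq (b := (1:ℝ)/2) (by norm_num)
  convert this using 2 with x
  ring_nf

lemma integrable_stdPdf : Integrable stdPdf := by
  unfold stdPdf
  exact integrable_gauss.div_const _

lemma integral_gauss : ∫ t : ℝ, Real.exp (-t^2/2) = Real.sqrt (2*π) := by
  have := integral_gaussian ((1:ℝ)/2)
  rw [show π / ((1:ℝ)/2) = 2*π by ring] at this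
  rw [← this]
  congr 1 with x
  ring_nf

lemma integral_stdPdf : ∫ t : ℝ, stdPdf t = 1 := by
  unfold stdPdf
  rw [integral_div, integral_gauss, div_self (by positivity)]

lemma one_sub_stdCdf (x : ℝ) : 1 - stdCdf x = ∫ t in Set.Ioi x, stdPdf t := by
  have h := intervalIntegral.integral_Iic_add_Ioi (μ := volume) (b := x)
    (integrable_stdPdf.integrableOn (s := Iic x)) (integrable_stdPdf.integrableOn (s := Ioi x))
  rw [integral_stdPdf] at h
  unfold stdCdf
  linarith

lemma mills_eq (x : ℝ) : mills x = Real.exp (x^2/2) * ∫ t in Set.Ioi x, Real.exp (-t^2/2) := by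
  unfold mills stdPdf
  rw [one_sub_stdCdf]
  unfold stdPdf
  rw [integral_div]
  have h1 : Real.sqrt (2*π) > 0 := by positivity
  have h2 : Real.exp (-x^2/2) > 0 := exp_pos _
  field_simp
  rw [mul_assoc, ← Real.exp_add]
  rw [show -(x^2/2) + x^2/2 = 0 by ring, Real.exp_zero, mul_one]

noncomputable def hAux (t : ℝ) : ℝ := t/(1+t^2) * Real.exp (-t^2/2)
noncomputable def dAux (t : ℝ) : ℝ := Real.exp (-t^2/2) * ((1 - 2*t^2 - t^4)/(1+t^2)^2)

lemma hasDerivAt_hAux (t : ℝ) : HasDerivAt hAux (dAux t) t := by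
  have h0 : (1:ℝ)+t^2 ≠ 0 := by positivity
  have d1 : HasDerivAt (fun x : ℝ => x/(1+x^2)) ((1*(1+t^2) - t*(2*t^1))/(1+t^2)^2) t :=
    (hasDerivAt_id t).div ((hasDerivAt_pow 2 t).const_add 1) h0
  have d2 : HasDerivAt (fun x : ℝ => Real.exp (-x^2/2)) (Real.exp (-t^2/2) * (-(2*t^1)/2)) t := by
    exact (((hasDerivAt_pow 2 t).neg).div_const 2).exp
  have := d1.mul d2
  refine this.congr_deriv ?_
  unfold dAux
  field_simp
  ring

lemma dAux_abs_le (t : ℝ) : |dAux t| ≤ Real.exp (-t^2/2) := by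
  unfold dAux
  rw [abs_mul, abs_of_pos (exp_pos _)]
  have h1 : |(1 - 2*t^2 - t^4)/(1+t^2)^2| ≤ 1 := by
    rw [abs_div, abs_of_pos (by positivity : (0:ℝ) < (1+t^2)^2), div_le_one (by positivity)]
    rw [abs_le]
    constructor <;> nlinarith [sq_nonneg t, sq_nonneg (t^2)]
  nlinarith [exp_pos (-t^2/2), abs_nonneg ((1 - 2*t^2 - t^4)/(1+t^2)^2)]

lemma continuous_dAux : Continuous dAux := by
  apply Continuous.mul (by fun_prop)
  exact Continuous.div (by fun_prop) (by fun_prop) (fun t => by positivity)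

lemma tendsto_hAux : Tendsto hAux atTop (nhds 0) := by
  apply squeeze_zero' (Eventually.filter_mono (le_refl atTop) ?_) ?_
    (tendsto_exp_neg_atTop_nhds_zero.comp (tendsto_id.atTop_div_const two_pos))
  · filter_upwards [eventually_ge_atTop (0:ℝ)] with t ht
    unfold hAux; positivity
  · filter_upwards [eventually_ge_atTop (1:ℝ)] with t ht
    unfold hAux
    have h1 : t/(1+t^2) ≤ 1 := by
      rw [div_le_one (by positivity)]; nlinarith
    have h2 : Real.exp (-t^2/2) ≤ Real.exp (-(t/2)) := by
      apply exp_le_exp.2; nlinarith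
    calc t/(1+t^2) * Real.exp (-t^2/2) ≤ 1 * Real.exp (-(t/2)) := by
          apply mul_le_mul h1 h2 (exp_pos _).le one_pos.le
      _ = ((fun x => Real.exp (-x)) ∘ fun x => x/2) t := by simp
    
lemma integrableOn_dAux (x : ℝ) : IntegrableOn (fun t => -dAux t) (Set.Ioi x) := by
  apply Integrable.integrableOn
  apply integrable_gauss.mono (continuous_dAux.neg.aestronglyMeasurable)
  filter_upwards with t
  simp only [Real.norm_eq_abs, Pi.neg_apply, abs_neg]
  calc |dAux t| ≤ Real.exp (-t^2/2) := dAux_abs_le t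
    _ ≤ |Real.exp (-t^2/2)| := le_abs_self _

lemma hAux_le (x : ℝ) : hAux x ≤ ∫ t in Set.Ioi x, Real.exp (-t^2/2) := by
  have ftc : ∫ t in Set.Ioi x, -dAux t = 0 - (-hAux x) := by
    apply integral_Ioi_of_hasDerivAt_of_tendsto' (f := fun t => -hAux t)
      (fun t _ => (hasDerivAt_hAux t).neg) (integrableOn_dAux x)
    rw [show (0:ℝ) = -0 by ring]
    exact tendsto_hAux.neg
  have : ∫ t in Set.Ioi x, -dAux t ≤ ∫ t in Set.Ioi x, Real.exp (-t^2/2) := by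
    apply setIntegral_mono (integrableOn_dAux x) integrable_gauss.integrableOn
    intro t
    have := dAux_abs_le t
    have := neg_abs_le (dAux t)
    simp only [Pi.neg_apply]
    linarith
  rw [ftc] at this
  linarith

lemma mills_lb {x : ℝ} (hx : 0 ≤ x) : x/(1+x^2) ≤ mills x := by
  rw [mills_eq]
  have h1 : x/(1+x^2) = Real.exp (x^2/2) * hAux x := by
    unfold hAux
    rw [show Real.exp (x^2/2) * (x/(1+x^2) * Real.exp (-x^2/2))
        = x/(1+x^2) * (Real.exp (x^2/2) * Real.exp (-x^2/2)) by ring, ← Real.exp_add]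
    rw [show x^2/2 + -x^2/2 = 0 by ring, Real.exp_zero, mul_one]
  rw [h1]
  exact mul_le_mul_of_nonneg_left (hAux_le x) (exp_pos _).le

lemma fMills_le_one {x : ℝ} (hx : 0 ≤ x) : fMills x ≤ 1 := by
  unfold fMills
  have h1 := mills_lb hx
  have h3 : (0:ℝ) < 1 + x^2 := by positivity
  rw [div_le_iff₀ h3] at h1
  have key : x^3 ≤ x^2 * mills x * (1+x^2) := by nlinarith [sq_nonneg x]
  nlinarith [key, sq_nonneg (2*x-1), h3]

lemma fMills_le_mu {a : ℝ} (ha : 0 ≤ a) : fMills a ≤ muMills := by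
  have hb : BddAbove (fMills '' Set.Ici 0) :=
    ⟨1, by rintro y ⟨x, hx, rfl⟩; exact fMills_le_one hx⟩
  exact le_csSup hb ⟨a, ha, rfl⟩

section Gauss
variable {c s : ℝ} (hc : 0 < c) (hs : 0 < s)

noncomputable def EE (c s u : ℝ) : ℝ := Real.exp (-(u^2/(2*c)) - s*u)

lemma EE_pos (u : ℝ) : 0 < EE c s u := exp_pos _

include hc in
lemma hasDerivAt_negEE (u : ℝ) :
    HasDerivAt (fun u => -EE c s u) ((u/c + s) * EE c s u) u := by
  have h1 : HasDerivAt (fun u : ℝ => -(u^2/(2*c)) - s*u) (-(2*u^1/(2*c)) - s*1) u :=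
    (((hasDerivAt_pow 2 u).div_const (2*c)).neg).sub ((hasDerivAt_id u).const_mul s)
  have h2 := h1.exp.neg
  refine h2.congr_deriv ?_
  unfold EE
  field_simp
  ring

include hc hs in
lemma tendsto_negEE : Tendsto (fun u => -EE c s u) atTop (nhds 0) := by
  rw [show (0:ℝ) = -0 by ring]
  apply Tendsto.neg
  apply squeeze_zero' ?_ ?_ (tendsto_exp_neg_atTop_nhds_zero.comp (tendsto_id.const_mul_atTop hs))
  · filter_upwards with u; exact (EE_pos u).le
  · filter_upwards with u
    have hq : 0 ≤ u^2/(2*c) := by positivity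
    show EE c s u ≤ Real.exp (-(s * id u))
    apply exp_le_exp.2
    simp only [id]
    linarith

lemma continuous_EE : Continuous (EE c s) := by unfold EE; fun_prop

include hc hs in
lemma integrableOn_W : IntegrableOn (fun u => (u/c + s) * EE c s u) (Set.Ioi 0) := by
  apply integrableOn_Ioi_deriv_of_nonneg (g := fun u => -EE c s u)
  · exact ((continuous_EE).neg.continuousAt).continuousWithinAt
  · exact fun x _ => hasDerivAt_negEE hc x
  · intro x hx
    have : 0 < x := hx
    have := EE_pos (c := c) (s := s) x
    have : 0 < x/c + s := by positivity
    positivity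
  · exact tendsto_negEE hc hs

include hc hs in
lemma integral_W : ∫ u in Set.Ioi 0, (u/c + s) * EE c s u = 1 := by
  rw [integral_Ioi_of_hasDerivAt_of_tendsto' (fun x _ => hasDerivAt_negEE hc x)
    (integrableOn_W hc hs) (tendsto_negEE hc hs)]
  unfold EE
  norm_num

include hc hs in
lemma integrableOn_EE : IntegrableOn (EE c s) (Set.Ioi 0) := by
  apply Integrable.mono ((integrableOn_W hc hs).const_mul s⁻¹) continuous_EE.aestronglyMeasurable.restrict
  rw [ae_restrict_iff' measurableSet_Ioi]
  filter_upwards with u hu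
  have h1 : 0 < u := hu
  have h2 := EE_pos (c := c) (s := s) u
  rw [Real.norm_eq_abs, Real.norm_eq_abs, abs_of_pos h2, abs_of_pos (by positivity)]
  rw [show s⁻¹ * ((u/c + s) * EE c s u) = (s⁻¹ * (u/c + s)) * EE c s u by ring]
  nth_rewrite 1 [show EE c s u = 1 * EE c s u by ring]
  apply mul_le_mul_of_nonneg_right _ h2.le
  rw [show (1:ℝ) = s⁻¹ * s by field_simp]
  apply mul_le_mul_of_nonneg_left _ (by positivity)
  have : 0 ≤ u/c := by positivity
  linarith

include hc hs in
lemma integrableOn_uEE : IntegrableOn (fun u => u * EE c s u) (Set.Ioi 0) := by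
  apply Integrable.mono ((integrableOn_W hc hs).const_mul c)
    (continuous_id.mul continuous_EE).aestronglyMeasurable.restrict
  rw [ae_restrict_iff' measurableSet_Ioi]
  filter_upwards with u hu
  have h1 : 0 < u := hu
  have h2 := EE_pos (c := c) (s := s) u
  rw [Real.norm_eq_abs, Real.norm_eq_abs, Pi.mul_apply, abs_of_pos (mul_pos (show 0 < id u from h1) h2), abs_of_pos (mul_pos hc (mul_pos (by positivity) h2))]
  rw [show c * ((u/c + s) * EE c s u) = (c * (u/c + s)) * EE c s u by ring]
  apply mul_le_mul_of_nonneg_right _ h2.le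
  have : c * (u/c + s) = u + c*s := by field_simp
  rw [this]
  simp only [id_eq]
  nlinarith [mul_pos hc hs]

include hc hs in
lemma integral_EE_le : ∫ u in Set.Ioi 0, EE c s u ≤ 1/s := by
  have h1 : ∫ u in Set.Ioi 0, EE c s u ≤ ∫ u in Set.Ioi 0, Real.exp (-s*u) := by
    apply setIntegral_mono (integrableOn_EE hc hs) (exp_neg_integrableOn_Ioi 0 hs)
    intro u
    unfold EE
    apply exp_le_exp.2
    have : 0 ≤ u^2/(2*c) := by positivity
    nlinarith
  refine h1.trans (le_of_eq ?_)
  have h2 := integral_comp_mul_left_Ioi (fun x => Real.exp (-x)) 0 hs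
  simp only [mul_zero, neg_mul] at h2 ⊢
  rw [h2, integral_exp_neg_Ioi_zero, smul_eq_mul, mul_one, one_div]

include hc hs in
lemma integral_EE_eq : ∫ u in Set.Ioi 0, EE c s u
    = Real.sqrt c * mills (s * Real.sqrt c) := by
  obtain ⟨r, hr0, hrc⟩ : ∃ r : ℝ, 0 < r ∧ r^2 = c :=
    ⟨Real.sqrt c, Real.sqrt_pos.2 hc, Real.sq_sqrt hc.le⟩
  have hrr : Real.sqrt c = r := by rw [← hrc, Real.sqrt_sq hr0.le]
  rw [hrr]
  set a := s * r with ha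
  have key : ∀ u : ℝ, EE c s u
      = (fun v => Real.exp (a^2/2) * Real.exp (-(v + a)^2/2)) (r⁻¹ * u) := by
    intro u
    unfold EE
    simp only
    rw [← Real.exp_add]
    congr 1
    rw [ha, ← hrc]
    field_simp
    ring
  have htrans : ∫ v in Set.Ioi (0:ℝ), Real.exp (-(v + a)^2/2)
      = ∫ w in Set.Ioi a, Real.exp (-w^2/2) := by
    have h := (measurePreserving_add_right volume a).setIntegral_preimage_emb
      (measurableEmbedding_addRight a) (fun w => Real.exp (-w^2/2)) (Set.Ioi a)
    simp only [preimage_add_const_Ioi, sub_self] at h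
    exact h
  calc ∫ u in Set.Ioi 0, EE c s u
      = ∫ u in Set.Ioi 0,
          (fun v => Real.exp (a^2/2) * Real.exp (-(v + a)^2/2)) (r⁻¹ * u) :=
        setIntegral_congr_fun measurableSet_Ioi (fun u _ => key u)
    _ = (r⁻¹)⁻¹ • ∫ v in Set.Ioi (r⁻¹ * 0),
          Real.exp (a^2/2) * Real.exp (-(v + a)^2/2) :=
        integral_comp_mul_left_Ioi (fun v => Real.exp (a^2/2) * Real.exp (-(v + a)^2/2)) 0
          (b := r⁻¹) (by positivity)
    _ = r * (Real.exp (a^2/2) * ∫ v in Set.Ioi (0:ℝ), Real.exp (-(v + a)^2/2)) := by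
        rw [inv_inv, mul_zero, smul_eq_mul, integral_const_mul]
    _ = r * (Real.exp (a^2/2) * ∫ w in Set.Ioi a, Real.exp (-w^2/2)) := by rw [htrans]
    _ = r * mills a := by rw [mills_eq]

include hc hs in
lemma integral_uEE : ∫ u in Set.Ioi 0, u * EE c s u
    = Real.sqrt c / s * fMills (s * Real.sqrt c) := by
  obtain ⟨r, hr0, hrc⟩ : ∃ r : ℝ, 0 < r ∧ r^2 = c :=
    ⟨Real.sqrt c, Real.sqrt_pos.2 hc, Real.sq_sqrt hc.le⟩
  have hrr : Real.sqrt c = r := by rw [← hrc, Real.sqrt_sq hr0.le]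
  have hW := integral_W hc hs
  have hsplit : ∀ u, (u/c + s) * EE c s u = c⁻¹ * (u * EE c s u) + s * EE c s u := by
    intro u; field_simp
  rw [setIntegral_congr_fun measurableSet_Ioi (fun u _ => hsplit u),
    integral_add ((integrableOn_uEE hc hs).const_mul _) ((integrableOn_EE hc hs).const_mul _),
    integral_const_mul, integral_const_mul, integral_EE_eq hc hs] at hW
  rw [hrr, ← hrc] at hW ⊢
  unfold fMills
  field_simp at hW ⊢
  linear_combination hW

include hc hs in
lemma integral_final : ∫ u in Set.Ioi 0, (u + 3) * EE c s u
    ≤ (3 + muMills * Real.sqrt c)/s := by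
  set a := s * Real.sqrt c with ha
  have hsc : (0:ℝ) < Real.sqrt c := Real.sqrt_pos.2 hc
  have ha0 : 0 ≤ a := by positivity
  have hsplit : ∀ u, (u+3) * EE c s u = u * EE c s u + 3 * EE c s u := fun u => by ring
  rw [setIntegral_congr_fun measurableSet_Ioi (fun u _ => hsplit u),
    integral_add (integrableOn_uEE hc hs) ((integrableOn_EE hc hs).const_mul _),
    integral_const_mul, integral_uEE hc hs, ← ha]
  have h1 : Real.sqrt c / s * fMills a ≤ Real.sqrt c / s * muMills :=
    mul_le_mul_of_nonneg_left (fMills_le_mu ha0) (by positivity)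
  have h2 : 3 * ∫ u in Set.Ioi 0, EE c s u ≤ 3 * (1/s) :=
    mul_le_mul_of_nonneg_left (integral_EE_le hc hs) (by norm_num)
  have : Real.sqrt c / s * muMills + 3 * (1/s) = (3 + muMills * Real.sqrt c)/s := by
    field_simp
    ring
  linarith

end Gauss

lemma sum_range_id_cast (k : ℕ) : ∑ i ∈ range k, (i:ℝ) = (k:ℝ)*((k:ℝ)-1)/2 := by
  induction k with
  | zero => simp
  | succ n ih => rw [Finset.sum_range_succ, ih]; push_cast; ring

lemma ckm_le {m k : ℕ} (hk1 : 1 ≤ k) (hkm : k ≤ m) :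
    ckm m k ≤ ((k:ℝ)+1) * Real.exp (-(((k:ℝ)-1)^2/(2*m))) := by
  have hm0 : (0:ℝ) < m := by
    have : 1 ≤ m := le_trans hk1 hkm
    exact_mod_cast Nat.lt_of_lt_of_le Nat.zero_lt_one this
  have hfac : ((k+1).factorial : ℝ) = (k+1) * k.factorial := by
    rw [Nat.factorial_succ]; push_cast; ring
  have hdesc : (m.choose k : ℝ) * k.factorial = ∏ i ∈ range k, ((m:ℝ) - i) := by
    have h1 : (m.descFactorial k : ℕ) = k.factorial * m.choose k :=
      Nat.descFactorial_eq_factorial_mul_choose m k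
    have h2 : (m.descFactorial k : ℕ) = ∏ i ∈ range k, (m - i) :=
      Nat.descFactorial_eq_prod_range m k
    have h3 : ((∏ i ∈ range k, (m - i) : ℕ) : ℝ) = ∏ i ∈ range k, ((m:ℝ) - i) := by
      push_cast
      apply Finset.prod_congr rfl
      intro i hi
      have : i ≤ m := le_trans (le_of_lt (Finset.mem_range.1 hi)) hkm
      rw [Nat.cast_sub this]
    rw [← h3, ← h2, h1]
    push_cast
    ring
  have heq : ckm m k = ((k:ℝ)+1) * ∏ i ∈ range k, (((m:ℝ) - i)/m) := by
    unfold ckm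
    rw [hfac, Finset.prod_div_distrib, Finset.prod_const, Finset.card_range, ← hdesc]
    field_simp
  rw [heq]
  apply mul_le_mul_of_nonneg_left _ (by positivity)
  calc ∏ i ∈ range k, (((m:ℝ) - i)/m)
      ≤ ∏ i ∈ range k, Real.exp (-(i:ℝ)/m) := by
        apply Finset.prod_le_prod
        · intro i hi
          have : (i:ℝ) ≤ m := by
            have : i ≤ m := le_trans (le_of_lt (Finset.mem_range.1 hi)) hkm
            exact_mod_cast this
          apply div_nonneg (by linarith) hm0.le
        · intro i hi
          have h := Real.add_one_le_exp (-(i:ℝ)/m)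
          have he : ((m:ℝ) - i)/m = -(i:ℝ)/m + 1 := by field_simp; ring
          rw [he]
          exact h
    _ = Real.exp (∑ i ∈ range k, -(i:ℝ)/m) := (Real.exp_sum _ _).symm
    _ ≤ Real.exp (-(((k:ℝ)-1)^2/(2*m))) := by
        apply exp_le_exp.2
        have hs2 : ∑ i ∈ range k, -(i:ℝ)/m = -(((k:ℝ)*((k:ℝ)-1)/2)/m) := by
          rw [← Finset.sum_div, ← sum_range_id_cast k, Finset.sum_neg_distrib, neg_div]
        rw [hs2]
        have hk1' : (1:ℝ) ≤ k := by exact_mod_cast hk1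
        rw [neg_le_neg_iff, div_le_div_iff₀ (by positivity) (by positivity)]
        nlinarith [hm0, hk1']

/-- Upper bound on `S_m(s)` in terms of `μ`. -/
theorem Sm_upper_bound_mu (m : ℕ) (hm : 1 ≤ m) (s : ℝ) (hs : s ∈ Set.Ioc (0:ℝ) 1) :
    Sm m s ≤ 2 + (3 + muMills * Real.sqrt (m : ℝ)) / s := by
  obtain ⟨hs0, hs1⟩ := hs
  have hm0 : (0:ℝ) < m := by exact_mod_cast Nat.lt_of_lt_of_le Nat.zero_lt_one hm
  set F : ℕ → ℝ := fun j => ((j:ℝ)+2) * Real.exp (-((j:ℝ)^2/(2*(m:ℝ))) - s*(j:ℝ)) with hF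
  set h : ℝ → ℝ := fun u => (u + 3) * EE (m:ℝ) s u with hh
  have hcont : Continuous h := by
    apply Continuous.mul (by fun_prop) continuous_EE
  -- Step 1 : termwise bound
  have step1 : Sm m s ≤ ∑ k ∈ Finset.Icc 1 m, F (k - 1) := by
    unfold Sm
    apply Finset.sum_le_sum
    intro k hk
    obtain ⟨hk1, hkm⟩ := Finset.mem_Icc.1 hk
    have hck := ckm_le hk1 hkm
    have hkc : ((k - 1 : ℕ) : ℝ) = (k:ℝ) - 1 := by
      rw [Nat.cast_sub hk1]; norm_num
    have hpow : (1 - s) ^ (k - 1) ≤ Real.exp (-s*((k:ℝ)-1)) := by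
      have h1 : (1 - s) ≤ Real.exp (-s) := by
        have := Real.add_one_le_exp (-s)
        linarith
      have h2 : (1-s)^(k-1) ≤ Real.exp (-s) ^ (k-1) :=
        pow_le_pow_left₀ (by linarith) h1 _
      refine h2.trans (le_of_eq ?_)
      rw [← Real.exp_nat_mul, hkc]
      ring_nf
    have hFval : F (k-1) = (((k:ℝ))+1) * Real.exp (-(((k:ℝ)-1)^2/(2*(m:ℝ)))) *
        Real.exp (-s*((k:ℝ)-1)) := by
      rw [hF]
      simp only [hkc]
      rw [mul_assoc, ← Real.exp_add]
      congr 1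
      · ring
      · congr 1; ring
    rw [hFval]
    have hc0 : 0 ≤ ckm m k := by
      unfold ckm; positivity
    apply mul_le_mul hck hpow (pow_nonneg (by linarith) _) (by positivity)
  -- Step 2 : reindex
  have step2 : ∑ k ∈ Finset.Icc 1 m, F (k - 1) = ∑ j ∈ Finset.range m, F j := by
    rw [← Finset.Ico_add_one_right_eq_Icc, Finset.sum_Ico_eq_sum_range]
    simp
  -- Step 3 : split off j = 0
  have step3 : ∑ j ∈ Finset.range m, F j = 2 + ∑ j ∈ Finset.Ico 1 m, F j := by
    rw [Finset.range_eq_Ico, Finset.sum_eq_sum_Ico_succ_bot hm]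
    congr 1
    rw [hF]
    norm_num
  -- Step 4 : termwise integral bound
  have step4 : ∀ j ∈ Finset.Ico 1 m, F j ≤ ∫ u in ((j:ℝ)-1)..(j:ℝ), h u := by
    intro j hj
    have hj1 : 1 ≤ j := (Finset.mem_Ico.1 hj).1
    have hj1' : (1:ℝ) ≤ (j:ℝ) := by exact_mod_cast hj1
    have hle : (j:ℝ) - 1 ≤ (j:ℝ) := by linarith
    have hint : IntervalIntegrable h volume ((j:ℝ)-1) (j:ℝ) :=
      hcont.intervalIntegrable _ _
    have hconst : ∫ _ in ((j:ℝ)-1)..(j:ℝ), F j = F j := by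
      rw [intervalIntegral.integral_const]
      rw [show (j:ℝ) - ((j:ℝ)-1) = 1 by ring, one_smul]
    rw [← hconst]
    apply intervalIntegral.integral_mono_on hle (intervalIntegrable_const) hint
    intro u hu
    obtain ⟨hu1, hu2⟩ := hu
    have hu0 : 0 ≤ u := by linarith
    rw [hF, hh]
    unfold EE
    apply mul_le_mul (by linarith) ?_ (exp_pos _).le (by linarith)
    apply exp_le_exp.2
    have h1 : u^2 ≤ (j:ℝ)^2 := by nlinarith
    have h2 : s*u ≤ s*(j:ℝ) := by nlinarith
    have h3 : u^2/(2*(m:ℝ)) ≤ (j:ℝ)^2/(2*(m:ℝ)) := by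
      apply div_le_div_of_nonneg_right h1 (by positivity) |>.trans_eq rfl
    linarith
  -- Step 5 : sum the integrals
  have hIoi : IntegrableOn h (Set.Ioi 0) := by
    have hi := (integrableOn_uEE hm0 hs0).add ((integrableOn_EE hm0 hs0).const_mul 3)
    apply hi.congr
    filter_upwards with u
    rw [hh]
    simp only [Pi.add_apply]
    ring
  have step5 : ∑ j ∈ Finset.Ico 1 m, (∫ u in ((j:ℝ)-1)..(j:ℝ), h u)
      ≤ ∫ u in Set.Ioi 0, h u := by
    have hadj : ∑ k ∈ Finset.range (m-1), (∫ u in (fun k : ℕ => (k:ℝ)) k..(fun k : ℕ => (k:ℝ)) (k+1), h u)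
        = ∫ u in (0:ℝ)..((m-1:ℕ):ℝ) , h u := by
      have := intervalIntegral.sum_integral_adjacent_intervals
        (a := fun k : ℕ => (k:ℝ)) (n := m-1) (f := h) (μ := volume)
        (fun k _ => hcont.intervalIntegrable _ _)
      simpa using this
    have hre : ∑ j ∈ Finset.Ico 1 m, (∫ u in ((j:ℝ)-1)..(j:ℝ), h u)
        = ∑ k ∈ Finset.range (m-1), (∫ u in (fun k : ℕ => (k:ℝ)) k..(fun k : ℕ => (k:ℝ)) (k+1), h u) := by
      rw [Finset.sum_Ico_eq_sum_range]
      apply Finset.sum_congr rfl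
      intro i _
      congr 1 <;> push_cast <;> ring
    rw [hre, hadj]
    rw [intervalIntegral.integral_of_le (by positivity)]
    apply setIntegral_mono_set hIoi ?_ (HasSubset.Subset.eventuallyLE Set.Ioc_subset_Ioi_self)
    filter_upwards [ae_restrict_mem measurableSet_Ioi] with u hu
    have h1 : (0:ℝ) < u := hu
    have h2 := EE_pos (c := (m:ℝ)) (s := s) u
    rw [hh]
    positivity
  -- Conclusion
  have hfin := integral_final (c := (m:ℝ)) hm0 hs0
  have hsum4 : ∑ j ∈ Finset.Ico 1 m, F j ≤ ∑ j ∈ Finset.Ico 1 m, (∫ u in ((j:ℝ)-1)..(j:ℝ), h u) :=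
    Finset.sum_le_sum step4
  have : ∫ u in Set.Ioi 0, h u ≤ (3 + muMills * Real.sqrt (m:ℝ))/s := hfin
  linarith [step1, step2.le, step3.le, hsum4, step5]
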